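/- Let Γ̃ ∈ M_n(ℂ), C ∈ ℂ with C ≠ 0, and let R, Θ, X ∈ M_n(ℂ) and V ∈ ℂⁿ satisfy: R² = (1/4)·Γ̃² − |C|²·I, R·Γ̃ = Γ̃·R, Θ·Γ̃ = Γ̃·Θ, Θ·R = R·Θ, and Γ̃·X + X·Γ̃ᴴ = V·Vᴴ. Define cosh(M) := (exp(M) + exp(−M))/2, sinh(M) := (exp(M) − exp(−M))/2, η̃₁ := cosh(Θ)·V, η̃₂ := (1/(2·conj(C)))·( cosh(Θ)·Γ̃ − 2·R·sinh(Θ) )·V, and Ω := cosh(Θ)·X·cosh(Θᴴ) + (1/(4|C|²))·cosh(Θ)·Γ̃·X·Γ̃ᴴ·cosh(Θᴴ) + (1/|C|²)·sinh(Θ)·R·X·Rᴴ·sinh(Θᴴ) − (1/(2|C|²))·( sinh(Θ)·R·X·Γ̃ᴴ·cosh(Θᴴ) + cosh(Θ)·Γ̃·X·Rᴴ·sinh(Θᴴ) ). Then Γ̃·Ω + Ω·Γ̃ᴴ = η̃₁·η̃₁ᴴ + η̃₂·η̃₂ᴴ. -/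

import Mathlib

open Matrix

/-- A vector of ℂⁿ viewed as an n×1 column matrix. -/
def colV {n : ℕ} (η : Fin n → ℂ) : Matrix (Fin n) (Fin 1) ℂ :=
  Matrix.of fun i _ => η i

/-- Hyperbolic cosine of a square complex matrix. -/
noncomputable def coshM {n : ℕ} (M : Matrix (Fin n) (Fin n) ℂ) :
    Matrix (Fin n) (Fin n) ℂ :=
  ((2 : ℂ)⁻¹) • (NormedSpace.exp M + NormedSpace.exp (-M))

/-- Hyperbolic sine of a square complex matrix. -/
noncomputable def sinhM {n : ℕ} (M : Matrix (Fin n) (Fin n) ℂ) :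
    Matrix (Fin n) (Fin n) ℂ :=
  ((2 : ℂ)⁻¹) • (NormedSpace.exp M - NormedSpace.exp (-M))

theorem stmt_14 {n : ℕ} (Γt : Matrix (Fin n) (Fin n) ℂ)
    (C : ℂ) (hC : C ≠ 0)
    (R Θ X : Matrix (Fin n) (Fin n) ℂ) (V : Fin n → ℂ)
    (hR : R * R = ((1 : ℂ)/4) • (Γt * Γt)
        - ((Complex.normSq C : ℝ) : ℂ) • (1 : Matrix (Fin n) (Fin n) ℂ))
    (hRΓ : R * Γt = Γt * R) (hΘΓ : Θ * Γt = Γt * Θ) (hΘR : Θ * R = R * Θ)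
    (hX : Γt * X + X * Γtᴴ = colV V * (colV V)ᴴ)
    (ηt₁ ηt₂ : Matrix (Fin n) (Fin 1) ℂ)
    (hηt₁ : ηt₁ = coshM Θ * colV V)
    (hηt₂ : ηt₂ = (1 / (2 * (starRingEnd ℂ) C)) •
        ((coshM Θ * Γt - 2 • (R * sinhM Θ)) * colV V))
    (Ω : Matrix (Fin n) (Fin n) ℂ)
    (hΩ : Ω = coshM Θ * X * coshM (Θᴴ)
        + (1 / (4 * ((Complex.normSq C : ℝ) : ℂ))) •
            (coshM Θ * Γt * X * Γtᴴ * coshM (Θᴴ))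
        + (1 / ((Complex.normSq C : ℝ) : ℂ)) •
            (sinhM Θ * R * X * Rᴴ * sinhM (Θᴴ))
        - (1 / (2 * ((Complex.normSq C : ℝ) : ℂ))) •
            (sinhM Θ * R * X * Γtᴴ * coshM (Θᴴ)
              + coshM Θ * Γt * X * Rᴴ * sinhM (Θᴴ))) :
    Γt * Ω + Ω * Γtᴴ = ηt₁ * ηt₁ᴴ + ηt₂ * ηt₂ᴴ := by
  letI : SeminormedRing (Matrix (Fin n) (Fin n) ℂ) := Matrix.linftyOpSemiNormedRing
  letI : NormedRing (Matrix (Fin n) (Fin n) ℂ) := Matrix.linftyOpNormedRing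
  letI : NormedAlgebra ℂ (Matrix (Fin n) (Fin n) ℂ) := Matrix.linftyOpNormedAlgebra
  set d : ℂ := ((Complex.normSq C : ℝ) : ℂ) with hd
  set v : Matrix (Fin n) (Fin 1) ℂ := colV V with hvdef
  set c : Matrix (Fin n) (Fin n) ℂ := coshM Θ with hcdef
  set s : Matrix (Fin n) (Fin n) ℂ := sinhM Θ with hsdef
  set W : Matrix (Fin n) (Fin n) ℂ := v * vᴴ with hWdef
  -- basic commutation facts
  have hΓΘ : Commute Γt Θ := (show Commute Θ Γt from hΘΓ).symm
  have hRΘ : Commute R Θ := (show Commute Θ R from hΘR).symm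
  have hΓec : Commute Γt (NormedSpace.exp Θ) := hΓΘ.exp_right
  have hΓec' : Commute Γt (NormedSpace.exp (-Θ)) := hΓΘ.neg_right.exp_right
  have hRec : Commute R (NormedSpace.exp Θ) := hRΘ.exp_right
  have hRec' : Commute R (NormedSpace.exp (-Θ)) := hRΘ.neg_right.exp_right
  have hΓc : Γt * c = c * Γt := ((hΓec.add_right hΓec').smul_right ((2:ℂ)⁻¹)).eq
  have hΓs : Γt * s = s * Γt := ((hΓec.sub_right hΓec').smul_right ((2:ℂ)⁻¹)).eq
  have hRs : R * s = s * R := ((hRec.sub_right hRec').smul_right ((2:ℂ)⁻¹)).eq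
  -- conjugate transpose of cosh and sinh
  have hnegH : -(Θᴴ) = (-Θ)ᴴ := (conjTranspose_neg Θ).symm
  have hstar : star ((2:ℂ)⁻¹) = (2:ℂ)⁻¹ := by
    simp [Complex.star_def, Complex.conj_inv]
  have hcH : coshM (Θᴴ) = cᴴ := by
    rw [hcdef, coshM, coshM, hnegH, Matrix.exp_conjTranspose, Matrix.exp_conjTranspose,
      conjTranspose_smul, conjTranspose_add, hstar]
  have hsH : sinhM (Θᴴ) = sᴴ := by
    rw [hsdef, sinhM, sinhM, hnegH, Matrix.exp_conjTranspose, Matrix.exp_conjTranspose,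
      conjTranspose_smul, conjTranspose_sub, hstar]
  -- the key computation lemma
  have key : ∀ A B : Matrix (Fin n) (Fin n) ℂ, Γt * A = A * Γt → Γt * B = B * Γt →
      Γt * (A * X * Bᴴ) + (A * X * Bᴴ) * Γtᴴ = A * W * Bᴴ := by
    intro A B hA hB
    have hBH : Bᴴ * Γtᴴ = Γtᴴ * Bᴴ := by
      rw [← conjTranspose_mul, ← conjTranspose_mul, hB]
    calc Γt * (A * X * Bᴴ) + (A * X * Bᴴ) * Γtᴴ
        = A * (Γt * X) * Bᴴ + A * (X * Γtᴴ) * Bᴴ := by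
          rw [mul_assoc (A * X) Bᴴ Γtᴴ, hBH, ← mul_assoc (A * X) Γtᴴ Bᴴ,
            mul_assoc A X Γtᴴ, ← mul_assoc Γt (A * X) Bᴴ, ← mul_assoc Γt A X, hA,
            mul_assoc A Γt X]
      _ = A * (Γt * X + X * Γtᴴ) * Bᴴ := by rw [mul_add, add_mul]
      _ = A * W * Bᴴ := by rw [hX]
  -- commutation with the composite left factors
  have hA2 : Γt * (c * Γt) = (c * Γt) * Γt := by
    rw [← mul_assoc, hΓc]
  have hA3 : Γt * (s * R) = (s * R) * Γt := by
    rw [← mul_assoc, hΓs, mul_assoc, ← hRΓ, ← mul_assoc]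
  -- rewrite Ω in the structured form
  have hΩ' : Ω = c * X * cᴴ + (1 / (4 * d)) • ((c * Γt) * X * (c * Γt)ᴴ)
      + (1 / d) • ((s * R) * X * (s * R)ᴴ)
      - (1 / (2 * d)) • ((s * R) * X * (c * Γt)ᴴ + (c * Γt) * X * (s * R)ᴴ) := by
    rw [hΩ, hcH, hsH]
    simp only [conjTranspose_mul, mul_assoc]
  have k1 := key c c hΓc hΓc
  have k2 := key (c * Γt) (c * Γt) hA2 hA2
  have k3 := key (s * R) (s * R) hA3 hA3
  have k4 := key (s * R) (c * Γt) hA3 hA2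
  have k5 := key (c * Γt) (s * R) hA2 hA3
  have lhs : Γt * Ω + Ω * Γtᴴ
      = c * W * cᴴ + (1 / (4 * d)) • ((c * Γt) * W * (c * Γt)ᴴ)
      + (1 / d) • ((s * R) * W * (s * R)ᴴ)
      - (1 / (2 * d)) • ((s * R) * W * (c * Γt)ᴴ + (c * Γt) * W * (s * R)ᴴ) := by
    rw [hΩ', ← k1, ← k2, ← k3, ← k4, ← k5]
    simp only [mul_add, add_mul, mul_sub, sub_mul, mul_smul_comm, smul_mul_assoc, smul_add]
    abel
  -- compute the right-hand side
  have r1 : ηt₁ * ηt₁ᴴ = c * W * cᴴ := by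
    rw [hηt₁, conjTranspose_mul, hWdef]
    simp only [Matrix.mul_assoc]
  have hMH : (c * Γt - 2 • (R * s))ᴴ = (c * Γt)ᴴ - 2 • ((s * R))ᴴ := by
    rw [conjTranspose_sub, hRs]
    congr 1
    rw [conjTranspose_smul]
    norm_num
  have r2 : ηt₂ * ηt₂ᴴ
      = (1 / (4 * d)) • ((c * Γt - 2 • (s * R)) * W * ((c * Γt)ᴴ - 2 • (s * R)ᴴ)) := by
    rw [hηt₂, conjTranspose_smul, Matrix.smul_mul, Matrix.mul_smul, smul_smul,
      conjTranspose_mul, hMH, hRs]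
    congr 1
    · have h1 : ((Complex.normSq C : ℝ) : ℂ) = (starRingEnd ℂ) C * C := by
        rw [mul_comm]; exact (Complex.mul_conj C).symm
      rw [hd, h1]
      simp only [star_div₀, star_one, star_mul', star_ofNat, Complex.star_def, Complex.conj_conj]
      rw [div_mul_div_comm, one_mul]
      congr 1
      ring
    · rw [hWdef]
      simp only [Matrix.mul_assoc]
  rw [lhs, r1, r2]
  have expand : (c * Γt - 2 • (s * R)) * W * ((c * Γt)ᴴ - 2 • (s * R)ᴴ)
      = (c * Γt) * W * (c * Γt)ᴴ - 2 • ((c * Γt) * W * (s * R)ᴴ)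
        - 2 • ((s * R) * W * (c * Γt)ᴴ) + 4 • ((s * R) * W * (s * R)ᴴ) := by
    simp only [sub_mul, mul_sub, smul_mul_assoc, mul_smul_comm, smul_smul, smul_sub]
    abel
  rw [expand]
  have hd0 : d ≠ 0 := by
    rw [hd]
    simpa [Complex.normSq_eq_zero] using hC
  match_scalars <;> field_simp <;> ring
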